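/- The point of minimum norm in the half-plane {l ∈ ℝ² : ‖l - x_a‖ ≤ ‖l - x_d‖}, for ‖x_a‖ > ‖x_d‖, is l* = ((‖x_a‖² - ‖x_d‖²)/(2‖x_a - x_d‖²)) · (x_a - x_d); in particular l* is parallel to x_a - x_d. -/

import Mathlib

open scoped RealInnerProductSpace


/-- The minimum-norm point of the safe reachable set is an explicit multiple
of `xa - xd` (in particular it is parallel to `xa - xd`). -/
theorem min_norm_point_of_safe_reachable_set
    (xa xd : EuclideanSpace ℝ (Fin 2)) (hne : xa ≠ xd) (hnorm : ‖xd‖ < ‖xa‖) :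
    ((‖xa‖ ^ 2 - ‖xd‖ ^ 2) / (2 * ‖xa - xd‖ ^ 2)) • (xa - xd) ∈
        {l : EuclideanSpace ℝ (Fin 2) | ‖l - xa‖ ≤ ‖l - xd‖} ∧
      ∀ l ∈ {l : EuclideanSpace ℝ (Fin 2) | ‖l - xa‖ ≤ ‖l - xd‖},
        ‖((‖xa‖ ^ 2 - ‖xd‖ ^ 2) / (2 * ‖xa - xd‖ ^ 2)) • (xa - xd)‖ ≤ ‖l‖ := by
  have hune : xa - xd ≠ 0 := sub_ne_zero.mpr hne
  set u := xa - xd with hu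
  have hupos : (0:ℝ) < ‖u‖ := norm_pos_iff.mpr hune
  set c : ℝ := (‖xa‖ ^ 2 - ‖xd‖ ^ 2) / (2 * ‖u‖ ^ 2) with hc
  have hdiff : (0:ℝ) < ‖xa‖ ^ 2 - ‖xd‖ ^ 2 := by nlinarith [norm_nonneg xd]
  have hcpos : 0 < c := div_pos hdiff (by positivity)
  have hcval : c * ‖u‖ ^ 2 = (‖xa‖ ^ 2 - ‖xd‖ ^ 2) / 2 := by
    rw [hc, div_mul_eq_mul_div, div_eq_div_iff (by positivity) two_ne_zero]; ring
  have huu : (inner ℝ u u : ℝ) = ‖u‖ ^ 2 := real_inner_self_eq_norm_sq u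
  have hua : (inner ℝ u xa : ℝ) - (inner ℝ u xd : ℝ) = ‖u‖ ^ 2 := by
    rw [← inner_sub_right, ← hu, huu]
  constructor
  · show ‖c • u - xa‖ ≤ ‖c • u - xd‖
    have h1 : ‖c • u - xa‖ ^ 2 ≤ ‖c • u - xd‖ ^ 2 := by
      rw [norm_sub_sq_real, norm_sub_sq_real, real_inner_smul_left, real_inner_smul_left]
      nlinarith
    exact (pow_le_pow_iff_left₀ (norm_nonneg _) (norm_nonneg _) two_ne_zero).mp h1
  · intro l hl
    simp only [Set.mem_setOf_eq] at hl
    have hl2 : ‖l - xa‖ ^ 2 ≤ ‖l - xd‖ ^ 2 := by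
      apply pow_le_pow_left₀ (norm_nonneg _) hl
    rw [norm_sub_sq_real, norm_sub_sq_real] at hl2
    have hlu : (inner ℝ l xa : ℝ) - (inner ℝ l xd : ℝ) = (inner ℝ l u : ℝ) := by rw [← inner_sub_right]
    have hinner : (‖xa‖ ^ 2 - ‖xd‖ ^ 2) / 2 ≤ (inner ℝ l u : ℝ) := by nlinarith
    have hcs : (inner ℝ l u : ℝ) ≤ ‖l‖ * ‖u‖ := real_inner_le_norm l u
    rw [norm_smul, Real.norm_eq_abs, abs_of_pos hcpos]
    have : c * ‖u‖ * ‖u‖ ≤ ‖l‖ * ‖u‖ := by nlinarith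
    exact le_of_mul_le_mul_right this hupos
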